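/- Let G be an m×n real matrix and S a subspace of n×m matrices quadratically invariant under G. Then for all K ∈ S and all j ≥ 0, K(GK)ʲ ∈ S. -/
import Mathlib


open Matrix

/-- If `S` is quadratically invariant under `G`, then `K(GK)ʲ ∈ S` for all
`K ∈ S` and all `j ≥ 0`. -/
theorem stmt_13 {m n : ℕ} (G : Matrix (Fin m) (Fin n) ℝ)
    (S : Submodule ℝ (Matrix (Fin n) (Fin m) ℝ))
    (hqi : ∀ K ∈ S, K * G * K ∈ S) :
    ∀ K ∈ S, ∀ j : ℕ, K * (G * K) ^ j ∈ S := by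
  have pol : ∀ K₁ ∈ S, ∀ K₂ ∈ S, K₁ * G * K₂ + K₂ * G * K₁ ∈ S := by
    intro K₁ h₁ K₂ h₂
    have h := S.sub_mem (S.sub_mem (hqi _ (S.add_mem h₁ h₂)) (hqi _ h₁)) (hqi _ h₂)
    have e : (K₁ + K₂) * G * (K₁ + K₂) - K₁ * G * K₁ - K₂ * G * K₂
        = K₁ * G * K₂ + K₂ * G * K₁ := by
      simp only [Matrix.add_mul, Matrix.mul_add]
      abel
    rwa [e] at h
  intro K hK j
  induction j with
  | zero => simpa using hK
  | succ j ih =>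
    have h := pol K hK _ ih
    have heq : K * G * (K * (G * K) ^ j) + (K * (G * K) ^ j) * G * K
        = (2 : ℝ) • (K * (G * K) ^ (j + 1)) := by
      have e1 : K * G * (K * (G * K) ^ j) = K * (G * K) ^ (j + 1) := by
        rw [Matrix.mul_assoc, ← Matrix.mul_assoc G, ← pow_succ']
      have e2 : K * (G * K) ^ j * G * K = K * (G * K) ^ (j + 1) := by
        rw [pow_succ, Matrix.mul_assoc, Matrix.mul_assoc]
      rw [e1, e2, two_smul]
    rw [heq] at h
    have := S.smul_mem (2 : ℝ)⁻¹ h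
    rwa [smul_smul, inv_mul_cancel₀ (by norm_num), one_smul] at this
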